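/- Let G be a BWR-game and Ĝ the BW-game obtained from G by replacing each random position v ∈ V_R with a deterministic position whose only arc is a self-loop with local reward μ_G(v). Then μ_{Ĝ}(v) = μ_G(v) for every position v. -/

import Mathlib

open Matrix Filter

/-- A BWR-game: finite digraph with no sinks, positions partitioned into
White (`player v = 0`), Black (`player v = 1`) and Random (`player v = 2`),
positive transition probabilities on arcs out of random positions summing to 1,
and local rewards on arcs. -/
structure BWR (V : Type) [Fintype V] [DecidableEq V] where
  succ : V → Finset V
  succ_nonempty : ∀ v, (succ v).Nonempty
  player : V → Fin 3
  p : V → V → ℝ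
  p_mem : ∀ v u, player v = 2 → (u ∈ succ v ↔ 0 < p v u)
  p_zero : ∀ v u, player v = 2 → u ∉ succ v → p v u = 0
  p_sum : ∀ v, player v = 2 → ∑ u ∈ succ v, p v u = 1
  r : V → V → ℝ

namespace BWR

variable {V : Type} [Fintype V] [DecidableEq V] (G : BWR V)

/-- A (pure stationary) situation is valid if it moves along arcs. -/
def Valid (s : V → V) : Prop := ∀ v, s v ∈ G.succ v

/-- Combine a White strategy and a Black strategy into one situation. -/
def combine (sW sB : V → V) : V → V := fun v => if G.player v = 0 then sW v else sB v

/-- Transition matrix of the Markov chain obtained by fixing situation `s`. -/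
noncomputable def P (s : V → V) : Matrix V V ℝ :=
  Matrix.of fun v u => if G.player v = 2 then G.p v u else if s v = u then 1 else 0

/-- Expected one-step reward under situation `s`. -/
noncomputable def rbar (s : V → V) : V → ℝ :=
  fun v => if G.player v = 2 then ∑ u ∈ G.succ v, G.p v u * G.r v u else G.r v (s v)

/-- Limiting mean payoff from initial position `v` under situation `s`. -/
noncomputable def payoff (s : V → V) (v : V) : ℝ :=
  Filter.liminf
    (fun T : ℕ => (∑ t ∈ Finset.range (T + 1), (G.P s ^ t).mulVec (G.rbar s)) v / (T + 1))
    Filter.atTop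

/-- `μ` is the value function of the game: some saddle point in pure stationary
strategies realizes it uniformly. -/
def IsValue (μ : V → ℝ) : Prop :=
  ∃ sW sB : V → V, G.Valid (G.combine sW sB) ∧
    (∀ v, μ v = G.payoff (G.combine sW sB) v) ∧
    (∀ sW' : V → V, G.Valid (G.combine sW' sB) → ∀ v, G.payoff (G.combine sW' sB) v ≤ μ v) ∧
    (∀ sB' : V → V, G.Valid (G.combine sW sB') → ∀ v, μ v ≤ G.payoff (G.combine sW sB') v)

/-- The local value `M̄[r](v)`. -/
noncomputable def mbar : V → ℝ := fun v =>
  if G.player v = 0 then (G.succ v).sup' (G.succ_nonempty v) (fun u => G.r v u)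
  else if G.player v = 1 then (G.succ v).inf' (G.succ_nonempty v) (fun u => G.r v u)
  else ∑ u ∈ G.succ v, G.p v u * G.r v u

/-- A locally optimal situation achieves the local value at every controlled position. -/
def LocallyOptimal (s : V → V) : Prop :=
  G.Valid s ∧ ∀ v, G.player v ≠ 2 → G.r v (s v) = G.mbar v

end BWR

/-- The BW-game `Ĝ` obtained from `G` by replacing each random position by a
deterministic (Black, arbitrarily) position whose only move is a self-loop
carrying local reward `μ v`. -/
noncomputable def hatGame {V : Type} [Fintype V] [DecidableEq V]
    (G : BWR V) (μ : V → ℝ) : BWR V where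
  succ := fun v => if G.player v = 2 then {v} else G.succ v
  succ_nonempty := fun v => by
    by_cases h : G.player v = 2 <;> simp [h, G.succ_nonempty v]
  player := fun v => if G.player v = 2 then 1 else G.player v
  p := fun _ _ => 0
  p_mem := fun v u h => by
    by_cases h2 : G.player v = 2 <;> simp_all
  p_zero := fun v u h _ => rfl
  p_sum := fun v h => by
    by_cases h2 : G.player v = 2 <;> simp_all
  r := fun v u => if G.player v = 2 then μ v else G.r v u

open Filter Matrix Finset Topology

namespace HatAux

variable {V : Type} [Fintype V] [DecidableEq V]

local instance : FirstCountableTopology (Matrix V V ℝ) :=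
  inferInstanceAs (FirstCountableTopology (V → V → ℝ))

def MStoch (P : Matrix V V ℝ) : Prop := (∀ i j, 0 ≤ P i j) ∧ ∀ i, ∑ j, P i j = 1

noncomputable def mpay (P : Matrix V V ℝ) (r : V → ℝ) (x : V) : ℝ :=
  Filter.liminf
    (fun T : ℕ => (∑ t ∈ Finset.range (T + 1), (P ^ t).mulVec r) x / (T + 1))
    Filter.atTop

noncomputable def mavg (P : Matrix V V ℝ) (T : ℕ) : Matrix V V ℝ :=
  ((T : ℝ) + 1)⁻¹ • ∑ t ∈ Finset.range (T + 1), P ^ t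

lemma MStoch.one : MStoch (1 : Matrix V V ℝ) := by
  constructor
  · intro i j
    by_cases h : i = j <;> simp [Matrix.one_apply, h]
  · intro i
    simp [Matrix.one_apply]

lemma MStoch.mul {P Q : Matrix V V ℝ} (hP : MStoch P) (hQ : MStoch Q) : MStoch (P * Q) := by
  constructor
  · intro i j
    rw [Matrix.mul_apply]
    exact Finset.sum_nonneg fun k _ => mul_nonneg (hP.1 i k) (hQ.1 k j)
  · intro i
    simp only [Matrix.mul_apply]
    rw [Finset.sum_comm]
    calc ∑ k, ∑ j, P i k * Q k j = ∑ k : V, P i k * ∑ j, Q k j := by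
          simp [Finset.mul_sum]
      _ = 1 := by simp [hQ.2, hP.2 i]

lemma MStoch.pow {P : Matrix V V ℝ} (hP : MStoch P) (t : ℕ) : MStoch (P ^ t) := by
  induction t with
  | zero => simpa using MStoch.one
  | succ t ih => rw [pow_succ]; exact ih.mul hP

lemma MStoch.le_one {P : Matrix V V ℝ} (hP : MStoch P) (i j : V) : P i j ≤ 1 := by
  calc P i j ≤ ∑ k, P i k :=
        Finset.single_le_sum (fun k _ => hP.1 i k) (Finset.mem_univ j)
    _ = 1 := hP.2 i

lemma mulVec_apply' (M : Matrix V V ℝ) (r : V → ℝ) (x : V) :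
    (M.mulVec r) x = ∑ j, M x j * r j := rfl

lemma mavg_apply (P : Matrix V V ℝ) (T : ℕ) (i j : V) :
    mavg P T i j = ((T : ℝ) + 1)⁻¹ * ∑ t ∈ Finset.range (T + 1), (P ^ t) i j := by
  simp [mavg, Matrix.smul_apply, Matrix.sum_apply]

lemma mavg_mem {P : Matrix V V ℝ} (hP : MStoch P) (T : ℕ) (i j : V) :
    mavg P T i j ∈ Set.Icc (0:ℝ) 1 := by
  have h0 : (0:ℝ) < (T : ℝ) + 1 := by positivity
  rw [mavg_apply]
  constructor
  · exact mul_nonneg (by positivity)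
      (Finset.sum_nonneg fun t _ => (hP.pow t).1 i j)
  · have h1 : ∑ t ∈ Finset.range (T + 1), (P ^ t) i j ≤ (T : ℝ) + 1 := by
      calc ∑ t ∈ Finset.range (T + 1), (P ^ t) i j
          ≤ ∑ _t ∈ Finset.range (T + 1), (1:ℝ) :=
            Finset.sum_le_sum fun t _ => (hP.pow t).le_one i j
        _ = (T : ℝ) + 1 := by simp
    calc ((T : ℝ) + 1)⁻¹ * ∑ t ∈ Finset.range (T + 1), (P ^ t) i j
        ≤ ((T : ℝ) + 1)⁻¹ * ((T : ℝ) + 1) := by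
          exact mul_le_mul_of_nonneg_left h1 (by positivity)
      _ = 1 := inv_mul_cancel₀ (ne_of_gt h0)

lemma tendsto_err {P : Matrix V V ℝ} (hP : MStoch P) :
    Tendsto (fun T : ℕ => ((T : ℝ) + 1)⁻¹ • (P ^ (T + 1) - 1)) atTop
      (𝓝 (0 : Matrix V V ℝ)) := by
  refine tendsto_pi_nhds.2 fun i => ?_
  rw [tendsto_pi_nhds]; intro j
  have hz : ((0 : Matrix V V ℝ) : Matrix V V ℝ) i j = 0 := rfl
  rw [hz]
  apply squeeze_zero_norm (a := fun T : ℕ => 2 * ((T : ℝ) + 1)⁻¹)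
  · intro T
    have hent : (((T : ℝ) + 1)⁻¹ • (P ^ (T + 1) - 1)) i j
        = ((T : ℝ) + 1)⁻¹ * ((P ^ (T + 1)) i j - (1 : Matrix V V ℝ) i j) := rfl
    rw [hent]
    rw [Real.norm_eq_abs, abs_mul]
    have h1 : |((T : ℝ) + 1)⁻¹| = ((T : ℝ) + 1)⁻¹ := abs_of_nonneg (by positivity)
    rw [h1, mul_comm]
    apply mul_le_mul_of_nonneg_right _ (by positivity)
    have ha : |(P ^ (T + 1)) i j| ≤ 1 := by
      rw [abs_of_nonneg ((hP.pow (T+1)).1 i j)]; exact (hP.pow (T+1)).le_one i j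
    have hb : |(1 : Matrix V V ℝ) i j| ≤ 1 := by
      by_cases h : i = j <;> simp [Matrix.one_apply, h]
    calc |(P ^ (T + 1)) i j - (1 : Matrix V V ℝ) i j|
        ≤ |(P ^ (T + 1)) i j| + |(1 : Matrix V V ℝ) i j| := abs_sub _ _
      _ ≤ 2 := by linarith
  · have := tendsto_one_div_add_atTop_nhds_zero_nat.const_mul (2:ℝ)
    simpa [one_div] using this

lemma sum_pow_mul (P : Matrix V V ℝ) (T : ℕ) :
    (∑ t ∈ Finset.range (T + 1), P ^ t) * P
      = ∑ t ∈ Finset.range (T + 1), P ^ t + (P ^ (T + 1) - 1) := by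
  have h1 : (∑ t ∈ Finset.range (T + 1), P ^ t) * P
      = ∑ t ∈ Finset.range (T + 1), P ^ (t + 1) := by
    rw [Finset.sum_mul]
    exact Finset.sum_congr rfl fun t _ => (pow_succ P t).symm
  have ha := Finset.sum_range_succ (fun t => P ^ t) (T + 1)
  have hb := Finset.sum_range_succ' (fun t => P ^ t) (T + 1)
  rw [ha] at hb
  -- hb : ∑_{range (T+1)} P^t + P^(T+1) = ∑_{range(T+1)} P^(t+1) + P^0
  rw [pow_zero] at hb
  rw [h1]
  have := hb.symm
  -- ∑ P^{t+1} + 1 = ∑ P^t + P^{T+1}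
  calc ∑ t ∈ Finset.range (T + 1), P ^ (t + 1)
      = (∑ t ∈ Finset.range (T + 1), P ^ (t + 1) + 1) - 1 := by abel
    _ = (∑ t ∈ Finset.range (T + 1), P ^ t + P ^ (T + 1)) - 1 := by rw [this]
    _ = ∑ t ∈ Finset.range (T + 1), P ^ t + (P ^ (T + 1) - 1) := by abel

lemma mul_sum_pow (P : Matrix V V ℝ) (T : ℕ) :
    P * (∑ t ∈ Finset.range (T + 1), P ^ t)
      = ∑ t ∈ Finset.range (T + 1), P ^ t + (P ^ (T + 1) - 1) := by
  have h1 : P * (∑ t ∈ Finset.range (T + 1), P ^ t)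
      = (∑ t ∈ Finset.range (T + 1), P ^ t) * P := by
    rw [Finset.mul_sum, Finset.sum_mul]
    exact Finset.sum_congr rfl fun t _ => by
      rw [← pow_succ, ← pow_succ']
  rw [h1, sum_pow_mul]

lemma mavg_mul (P : Matrix V V ℝ) (T : ℕ) :
    mavg P T * P = mavg P T + ((T : ℝ) + 1)⁻¹ • (P ^ (T + 1) - 1) := by
  rw [mavg, smul_mul_assoc, sum_pow_mul, smul_add]

lemma mul_mavg (P : Matrix V V ℝ) (T : ℕ) :
    P * mavg P T = mavg P T + ((T : ℝ) + 1)⁻¹ • (P ^ (T + 1) - 1) := by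
  rw [mavg, mul_smul_comm, mul_sum_pow, smul_add]

lemma mavg_mul_fixed {P Q : Matrix V V ℝ} (hPQ : P * Q = Q) (T : ℕ) :
    mavg P T * Q = Q := by
  have hpow : ∀ t : ℕ, P ^ t * Q = Q := by
    intro t
    induction t with
    | zero => simp
    | succ t ih => rw [pow_succ', mul_assoc, ih, hPQ]
  rw [mavg, smul_mul_assoc, Finset.sum_mul]
  rw [Finset.sum_congr rfl fun t _ => hpow t]
  rw [Finset.sum_const, Finset.card_range]
  rw [← Nat.cast_smul_eq_nsmul ℝ, smul_smul]
  rw [show (((T:ℕ) + 1 : ℕ) : ℝ) = (T : ℝ) + 1 by push_cast; ring]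
  rw [inv_mul_cancel₀ (by positivity), one_smul]

lemma fixed_mul_mavg {P Q : Matrix V V ℝ} (hQP : Q * P = Q) (T : ℕ) :
    Q * mavg P T = Q := by
  have hpow : ∀ t : ℕ, Q * P ^ t = Q := by
    intro t
    induction t with
    | zero => simp
    | succ t ih => rw [pow_succ, ← mul_assoc, ih, hQP]
  rw [mavg, mul_smul_comm, Finset.mul_sum]
  rw [Finset.sum_congr rfl fun t _ => hpow t]
  rw [Finset.sum_const, Finset.card_range]
  rw [← Nat.cast_smul_eq_nsmul ℝ, smul_smul]
  rw [show (((T:ℕ) + 1 : ℕ) : ℝ) = (T : ℝ) + 1 by push_cast; ring]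
  rw [inv_mul_cancel₀ (by positivity), one_smul]

lemma limpt {P : Matrix V V ℝ} (hP : MStoch P) {φ : ℕ → ℕ} (hφ : Tendsto φ atTop atTop)
    {Q : Matrix V V ℝ} (hQ : Tendsto (fun n => mavg P (φ n)) atTop (𝓝 Q)) :
    Q * P = Q ∧ P * Q = Q ∧ ∀ i j, 0 ≤ Q i j := by
  have herr : Tendsto (fun n => ((φ n : ℝ) + 1)⁻¹ • (P ^ (φ n + 1) - 1)) atTop
      (𝓝 (0 : Matrix V V ℝ)) := (tendsto_err hP).comp hφ
  refine ⟨?_, ?_, ?_⟩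
  · have h1 : Tendsto (fun n => mavg P (φ n) * P) atTop (𝓝 (Q * P)) :=
      ((continuous_id.matrix_mul continuous_const).tendsto Q).comp hQ
    have h2 : Tendsto (fun n => mavg P (φ n) * P) atTop (𝓝 (Q + 0)) := by
      simp only [mavg_mul]
      exact hQ.add herr
    have := tendsto_nhds_unique h1 h2
    simpa using this
  · have h1 : Tendsto (fun n => P * mavg P (φ n)) atTop (𝓝 (P * Q)) :=
      ((continuous_const.matrix_mul continuous_id).tendsto Q).comp hQ
    have h2 : Tendsto (fun n => P * mavg P (φ n)) atTop (𝓝 (Q + 0)) := by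
      simp only [mul_mavg]
      exact hQ.add herr
    have := tendsto_nhds_unique h1 h2
    simpa using this
  · intro i j
    have h1 : Tendsto (fun n => mavg P (φ n) i j) atTop (𝓝 (Q i j)) :=
      ((continuous_id.matrix_elem i j).tendsto Q).comp hQ
    exact ge_of_tendsto' h1 fun n => (mavg_mem hP (φ n) i j).1

lemma exists_cesaro (P : Matrix V V ℝ) (hP : MStoch P) :
    ∃ Q : Matrix V V ℝ, Tendsto (mavg P) atTop (𝓝 Q) ∧
      Q * P = Q ∧ P * Q = Q ∧ Q * Q = Q ∧ ∀ i j, 0 ≤ Q i j := by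
  have hKc : IsCompact {M : Matrix V V ℝ | ∀ i j, M i j ∈ Set.Icc (0:ℝ) 1} := by
    have h := isCompact_univ_pi
      (fun _ : V => isCompact_univ_pi fun _ : V => isCompact_Icc (a := (0:ℝ)) (b := 1))
    have heq : {M : Matrix V V ℝ | ∀ i j, M i j ∈ Set.Icc (0:ℝ) 1}
        = (Set.univ.pi (fun _ : V => Set.univ.pi fun _ : V => Set.Icc (0:ℝ) 1)
            : Set (V → V → ℝ)) := by
      ext M
      constructor
      · intro hM
        exact Set.mem_univ_pi.2 fun i => Set.mem_univ_pi.2 fun j => hM i j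
      · intro hM i j
        exact Set.mem_univ_pi.1 (Set.mem_univ_pi.1 hM i) j
    rw [heq]; exact h
  have hmem : ∀ T : ℕ, mavg P T ∈ {M : Matrix V V ℝ | ∀ i j, M i j ∈ Set.Icc (0:ℝ) 1} :=
    fun T i j => mavg_mem hP T i j
  obtain ⟨Q, -, φ, hφmono, hQ⟩ := IsCompact.tendsto_subseq hKc hmem
  have hlp := limpt hP hφmono.tendsto_atTop hQ
  obtain ⟨hQP, hPQ, hQ0⟩ := hlp
  have hQQ : Q * Q = Q := by
    have h1 : Tendsto (fun n => mavg P (φ n) * Q) atTop (𝓝 (Q * Q)) :=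
      ((continuous_id.matrix_mul continuous_const).tendsto Q).comp hQ
    have h2 : Tendsto (fun n => mavg P (φ n) * Q) atTop (𝓝 Q) := by
      simp only [fun n => mavg_mul_fixed hPQ (φ n)]
      exact tendsto_const_nhds
    exact tendsto_nhds_unique h1 h2
  refine ⟨Q, ?_, hQP, hPQ, hQQ, hQ0⟩
  apply Filter.tendsto_of_subseq_tendsto
  intro ns hns
  obtain ⟨Q', -, ψ, hψmono, hQ'⟩ := IsCompact.tendsto_subseq hKc (fun n => hmem (ns n))
  have hns' : Tendsto (fun n => ns (ψ n)) atTop atTop := hns.comp hψmono.tendsto_atTop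
  have hQ'' : Tendsto (fun n => mavg P (ns (ψ n))) atTop (𝓝 Q') := hQ'
  have hlp' := limpt hP hns' hQ''
  obtain ⟨hQ'P, hPQ', -⟩ := hlp'
  -- Q' = Q
  have e1 : Q * Q' = Q := by
    have h1 : Tendsto (fun n => Q * mavg P (ns (ψ n))) atTop (𝓝 (Q * Q')) :=
      ((continuous_const.matrix_mul continuous_id).tendsto Q').comp hQ''
    have h2 : Tendsto (fun n => Q * mavg P (ns (ψ n))) atTop (𝓝 Q) := by
      simp only [fun n => fixed_mul_mavg hQP (ns (ψ n))]
      exact tendsto_const_nhds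
    exact tendsto_nhds_unique h1 h2
  have e2 : Q * Q' = Q' := by
    have h1 : Tendsto (fun n => mavg P (φ n) * Q') atTop (𝓝 (Q * Q')) :=
      ((continuous_id.matrix_mul continuous_const).tendsto Q).comp hQ
    have h2 : Tendsto (fun n => mavg P (φ n) * Q') atTop (𝓝 Q') := by
      simp only [fun n => mavg_mul_fixed hPQ' (φ n)]
      exact tendsto_const_nhds
    exact tendsto_nhds_unique h1 h2
  have : Q' = Q := by rw [← e1, e2]
  exact ⟨ψ, this ▸ hQ''⟩

end HatAux

set_option linter.unusedSectionVars false
namespace HatAux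
open Filter Matrix Finset Topology
variable {V : Type} [Fintype V] [DecidableEq V]

lemma mavg_mulVec (P : Matrix V V ℝ) (T : ℕ) (f : V → ℝ) (x : V) :
    ((mavg P T).mulVec f) x
      = ((T : ℝ) + 1)⁻¹ * ∑ t ∈ Finset.range (T + 1), ((P ^ t).mulVec f) x := by
  rw [mulVec_apply']
  rw [Finset.sum_congr rfl fun j _ => by rw [mavg_apply]]
  calc ∑ j, (((T : ℝ) + 1)⁻¹ * ∑ t ∈ Finset.range (T + 1), (P ^ t) x j) * f j
      = ∑ j, ((T : ℝ) + 1)⁻¹ * ∑ t ∈ Finset.range (T + 1), (P ^ t) x j * f j := by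
        apply Finset.sum_congr rfl
        intro j _
        rw [mul_assoc, Finset.sum_mul]
    _ = ((T : ℝ) + 1)⁻¹ * ∑ j, ∑ t ∈ Finset.range (T + 1), (P ^ t) x j * f j := by
        rw [Finset.mul_sum]
    _ = ((T : ℝ) + 1)⁻¹ * ∑ t ∈ Finset.range (T + 1), ((P ^ t).mulVec f) x := by
        rw [Finset.sum_comm]
        simp only [mulVec_apply']

lemma tendsto_mulVec {M : ℕ → Matrix V V ℝ} {Q : Matrix V V ℝ}
    (h : Tendsto M atTop (𝓝 Q)) (f : V → ℝ) (x : V) :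
    Tendsto (fun n => ((M n).mulVec f) x) atTop (𝓝 ((Q.mulVec f) x)) := by
  simp only [mulVec_apply']
  apply tendsto_finset_sum
  intro j _
  exact (((continuous_id.matrix_elem x j).tendsto Q).comp h).mul_const (f j)

lemma tendsto_pay {P Q : Matrix V V ℝ} (hQ : Tendsto (mavg P) atTop (𝓝 Q))
    (r : V → ℝ) (x : V) :
    Tendsto (fun T : ℕ => (∑ t ∈ Finset.range (T + 1), (P ^ t).mulVec r) x / (T + 1))
      atTop (𝓝 ((Q.mulVec r) x)) := by
  have heq : ∀ T : ℕ, (∑ t ∈ Finset.range (T + 1), (P ^ t).mulVec r) x / ((T : ℝ) + 1)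
      = ((mavg P T).mulVec r) x := by
    intro T
    rw [mavg_mulVec, Finset.sum_apply, div_eq_inv_mul]
  simp only [heq]
  exact tendsto_mulVec hQ r x

lemma mpay_eq {P Q : Matrix V V ℝ} (hQ : Tendsto (mavg P) atTop (𝓝 Q))
    (r : V → ℝ) (x : V) : mpay P r x = (Q.mulVec r) x :=
  (tendsto_pay hQ r x).liminf_eq

lemma mpay_neg {P : Matrix V V ℝ} (hP : MStoch P) (r : V → ℝ) (x : V) :
    mpay P (fun y => -(r y)) x = -(mpay P r x) := by
  obtain ⟨Q, hQt, -, -, -, -⟩ := exists_cesaro P hP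
  rw [mpay_eq hQt, mpay_eq hQt]
  rw [mulVec_apply', mulVec_apply']
  simp [Finset.sum_neg_distrib, mul_neg]

set_option maxHeartbeats 1000000 in
lemma key (P P' : Matrix V V ℝ) (hP : MStoch P) (hP' : MStoch P') (v u : V)
    (hrow : ∀ x, x ≠ v → P' x = P x)
    (hPv : ∀ y, P' v y = if y = u then 1 else 0)
    (r r' : V → ℝ) (hr : ∀ x, x ≠ v → r' x = r x)
    (μ : V → ℝ) (hpay : ∀ x, mpay P r x = μ x) (hle : ∀ x, mpay P' r' x ≤ μ x) :
    μ u ≤ μ v := by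
  by_contra hcon
  push_neg at hcon
  obtain ⟨Q, hQt, hQP, hPQ, hQQ, hQ0⟩ := exists_cesaro P hP
  obtain ⟨Q', hQt', hQ'P', hP'Q', hQ'Q', hQ0'⟩ := exists_cesaro P' hP'
  have hμfun : μ = Q.mulVec r := by
    funext x
    rw [← hpay x, mpay_eq hQt]
  have harm : P.mulVec μ = μ := by
    rw [hμfun, Matrix.mulVec_mulVec, hPQ]
  have hPvμ : (P'.mulVec μ) v = μ u := by
    rw [mulVec_apply']
    rw [Finset.sum_congr rfl fun y _ => by rw [hPv y]]
    simp [ite_mul, Finset.sum_ite_eq']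
  have sub : ∀ x, μ x ≤ (P'.mulVec μ) x := by
    intro x
    by_cases hx : x = v
    · subst hx
      rw [hPvμ]
      exact le_of_lt hcon
    · have hx2 : (P'.mulVec μ) x = (P.mulVec μ) x := by
        rw [mulVec_apply', mulVec_apply', hrow x hx]
      rw [hx2, harm]
  have subpow : ∀ (t : ℕ) (x : V), μ x ≤ ((P' ^ t).mulVec μ) x := by
    intro t
    induction t with
    | zero => intro x; simp [Matrix.one_mulVec]
    | succ t ih =>
      intro x
      have hps : (P' ^ (t + 1)).mulVec μ = P'.mulVec ((P' ^ t).mulVec μ) := by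
        rw [Matrix.mulVec_mulVec, ← pow_succ']
      rw [hps]
      calc μ x ≤ (P'.mulVec μ) x := sub x
        _ ≤ (P'.mulVec ((P' ^ t).mulVec μ)) x := by
            rw [mulVec_apply', mulVec_apply']
            exact Finset.sum_le_sum fun y _ =>
              mul_le_mul_of_nonneg_left (ih y) (hP'.1 x y)
  have Qsub : ∀ x, μ x ≤ (Q'.mulVec μ) x := by
    intro x
    have ht : Tendsto (fun T => ((mavg P' T).mulVec μ) x) atTop (𝓝 ((Q'.mulVec μ) x)) :=
      tendsto_mulVec hQt' μ x
    apply ge_of_tendsto' ht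
    intro T
    rw [mavg_mulVec]
    have h1 : ((T:ℝ) + 1) * μ x ≤ ∑ t ∈ Finset.range (T + 1), ((P' ^ t).mulVec μ) x := by
      calc ((T:ℝ) + 1) * μ x = ∑ _t ∈ Finset.range (T + 1), μ x := by
            rw [Finset.sum_const, Finset.card_range, nsmul_eq_mul]
            push_cast
            ring
        _ ≤ ∑ t ∈ Finset.range (T + 1), ((P' ^ t).mulVec μ) x :=
            Finset.sum_le_sum fun t _ => subpow t x
    calc μ x = ((T:ℝ) + 1)⁻¹ * (((T:ℝ) + 1) * μ x) := by
          rw [← mul_assoc, inv_mul_cancel₀ (by positivity), one_mul]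
      _ ≤ ((T:ℝ) + 1)⁻¹ * ∑ t ∈ Finset.range (T + 1), ((P' ^ t).mulVec μ) x :=
          mul_le_mul_of_nonneg_left h1 (by positivity)
  have hπinv : ∀ z, ∑ y, Q' u y * P' y z = Q' u z := by
    intro z
    have h := congrFun (congrFun hQ'P' u) z
    rw [Matrix.mul_apply] at h
    exact h
  by_cases hv : Q' u v = 0
  · -- v not in the recurrent support of row u
    have hRv : ∀ y, Q' u y ≠ 0 → y ≠ v := fun y hy h => hy (h ▸ hv)
    have hclosed : ∀ y z, Q' u y ≠ 0 → P' y z ≠ 0 → Q' u z ≠ 0 := by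
      intro y z hy hz
      have h1 : Q' u y * P' y z ≤ ∑ w, Q' u w * P' w z :=
        Finset.single_le_sum (fun w _ => mul_nonneg (hQ0' u w) (hP'.1 w z))
          (Finset.mem_univ y)
      have h2 : 0 < Q' u y * P' y z :=
        mul_pos (lt_of_le_of_ne (hQ0' u y) (Ne.symm hy))
          (lt_of_le_of_ne (hP'.1 y z) (Ne.symm hz))
      have : 0 < Q' u z := by rw [← hπinv z]; linarith
      exact ne_of_gt this
    have hrowfix : ∀ (k : ℕ) (y : V), Q' u y ≠ 0 →
        (∀ z, (P' ^ k) y z = (P ^ k) y z) ∧ (∀ z, (P' ^ k) y z ≠ 0 → Q' u z ≠ 0) := by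
      intro k
      induction k with
      | zero =>
        intro y hy
        constructor
        · intro z; rw [pow_zero, pow_zero]
        · intro z hz
          rw [pow_zero] at hz
          have : y = z := by
            by_contra hne
            exact hz (Matrix.one_apply_ne hne)
          exact this ▸ hy
      | succ k ih =>
        intro y hy
        constructor
        · intro z
          rw [pow_succ, Matrix.mul_apply, pow_succ, Matrix.mul_apply]
          apply Finset.sum_congr rfl
          intro w _
          by_cases hw : (P' ^ k) y w = 0
          · have hw2 : (P ^ k) y w = 0 := by rw [← (ih y hy).1 w]; exact hw
            rw [hw, hw2, zero_mul, zero_mul]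
          · have hwR : Q' u w ≠ 0 := (ih y hy).2 w hw
            rw [(ih y hy).1 w, hrow w (hRv w hwR)]
        · intro z hz
          rw [pow_succ, Matrix.mul_apply] at hz
          obtain ⟨w, -, hw⟩ := Finset.exists_ne_zero_of_sum_ne_zero hz
          exact hclosed w z ((ih y hy).2 w (left_ne_zero_of_mul hw))
            (right_ne_zero_of_mul hw)
    have hpayR : ∀ y, Q' u y ≠ 0 → mpay P' r' y = μ y := by
      intro y hy
      have hseq : ∀ T : ℕ,
          (∑ t ∈ Finset.range (T + 1), (P' ^ t).mulVec r') y
            = (∑ t ∈ Finset.range (T + 1), (P ^ t).mulVec r) y := by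
        intro T
        rw [Finset.sum_apply, Finset.sum_apply]
        apply Finset.sum_congr rfl
        intro t _
        rw [mulVec_apply', mulVec_apply']
        apply Finset.sum_congr rfl
        intro z _
        by_cases hz : (P' ^ t) y z = 0
        · have hz2 : (P ^ t) y z = 0 := by rw [← (hrowfix t y hy).1 z]; exact hz
          rw [hz, hz2, zero_mul, zero_mul]
        · have hzR := (hrowfix t y hy).2 z hz
          rw [(hrowfix t y hy).1 z, hr z (hRv z hzR)]
      have : mpay P' r' y = mpay P r y := by
        unfold mpay
        apply Filter.liminf_congr
        apply Filter.Eventually.of_forall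
        intro T
        rw [hseq T]
      rw [this, hpay y]
    have hQ'r' : ∀ x, mpay P' r' x = (Q'.mulVec r') x := mpay_eq hQt' r'
    have hup : (Q'.mulVec μ) u ≤ (Q'.mulVec r') u := by
      have h1 : (Q'.mulVec r') u = ∑ y, Q' u y * (Q'.mulVec r') y := by
        conv_lhs => rw [← hQ'Q']
        rw [← Matrix.mulVec_mulVec, mulVec_apply']
      have h2 : ∑ y, Q' u y * (Q'.mulVec r') y = ∑ y, Q' u y * μ y := by
        apply Finset.sum_congr rfl
        intro y _
        by_cases hy : Q' u y = 0
        · rw [hy, zero_mul, zero_mul]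
        · rw [← hQ'r' y, hpayR y hy]
      rw [h1, h2, mulVec_apply']
    have hfin1 : μ u ≤ mpay P' r' u := by
      rw [hQ'r' u]
      calc μ u ≤ (Q'.mulVec μ) u := Qsub u
        _ ≤ (Q'.mulVec r') u := hup
    have hharm' : P'.mulVec (Q'.mulVec r') = Q'.mulVec r' := by
      rw [Matrix.mulVec_mulVec, hP'Q']
    have hvu : mpay P' r' v = mpay P' r' u := by
      rw [hQ'r' v, hQ'r' u]
      have h := congrFun hharm' v
      rw [mulVec_apply'] at h
      rw [← h]
      rw [Finset.sum_congr rfl fun y _ => by rw [hPv y]]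
      simp [ite_mul, Finset.sum_ite_eq']
    have hlev := hle v
    rw [hvu] at hlev
    have : μ u ≤ μ v := le_trans hfin1 hlev
    exact absurd this (not_le.mpr hcon)
  · -- v is in the recurrent support: contradiction with invariance
    have hπv : 0 < Q' u v := lt_of_le_of_ne (hQ0' u v) (Ne.symm hv)
    have hA0 : ∑ x, Q' u x * ((P'.mulVec μ) x - μ x) = 0 := by
      have h1 : ∑ x, Q' u x * (P'.mulVec μ) x = ∑ x, Q' u x * μ x := by
        calc ∑ x, Q' u x * (P'.mulVec μ) x
            = ∑ x, ∑ z, Q' u x * (P' x z * μ z) := by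
              apply Finset.sum_congr rfl
              intro x _
              rw [mulVec_apply', Finset.mul_sum]
          _ = ∑ z, ∑ x, Q' u x * (P' x z * μ z) := Finset.sum_comm
          _ = ∑ z, (∑ x, Q' u x * P' x z) * μ z := by
              apply Finset.sum_congr rfl
              intro z _
              rw [Finset.sum_mul]
              apply Finset.sum_congr rfl
              intro x _
              ring
          _ = ∑ z, Q' u z * μ z := by
              apply Finset.sum_congr rfl
              intro z _
              rw [hπinv z]
      calc ∑ x, Q' u x * ((P'.mulVec μ) x - μ x)
          = ∑ x, Q' u x * (P'.mulVec μ) x - ∑ x, Q' u x * μ x := by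
            rw [← Finset.sum_sub_distrib]
            apply Finset.sum_congr rfl
            intro x _
            ring
        _ = 0 := by rw [h1, sub_self]
    have hApos : 0 < ∑ x, Q' u x * ((P'.mulVec μ) x - μ x) := by
      have hterm : 0 < Q' u v * ((P'.mulVec μ) v - μ v) := by
        apply mul_pos hπv
        rw [hPvμ]
        linarith
      have hsum : Q' u v * ((P'.mulVec μ) v - μ v)
          ≤ ∑ x, Q' u x * ((P'.mulVec μ) x - μ x) :=
        Finset.single_le_sum
          (fun x _ => mul_nonneg (hQ0' u x) (sub_nonneg.mpr (sub x)))
          (Finset.mem_univ v)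
      linarith
    rw [hA0] at hApos
    exact lt_irrefl 0 hApos

lemma tendsto_cesaro_eventually_const (g : ℕ → ℝ) (c : ℝ) (k : ℕ)
    (h : ∀ j, k ≤ j → g j = c) :
    Tendsto (fun T : ℕ => (∑ j ∈ Finset.range (T + 1), g j) / (T + 1)) atTop (𝓝 c) := by
  have key : ∀ T : ℕ, k ≤ T + 1 →
      (∑ j ∈ Finset.range (T + 1), g j)
        = (∑ j ∈ Finset.range k, (g j - c)) + ((T : ℝ) + 1) * c := by
    intro T hT
    have h1 : ∑ j ∈ Finset.range (T + 1), (g j - c) = ∑ j ∈ Finset.range k, (g j - c) := by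
      symm
      apply Finset.sum_subset (Finset.range_subset_range.mpr hT)
      intro j _ hjk
      have hkj : k ≤ j := by
        by_contra hc
        exact hjk (Finset.mem_range.mpr (not_le.mp hc))
      rw [h j hkj, sub_self]
    have h2 : ∑ j ∈ Finset.range (T + 1), (g j - c)
        = (∑ j ∈ Finset.range (T + 1), g j) - ((T : ℝ) + 1) * c := by
      rw [Finset.sum_sub_distrib, Finset.sum_const, Finset.card_range, nsmul_eq_mul]
      push_cast
      ring
    rw [h2] at h1
    linarith
  have hev : (fun T : ℕ => (∑ j ∈ Finset.range (T + 1), g j) / ((T : ℝ) + 1))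
      =ᶠ[atTop] (fun T : ℕ => (∑ j ∈ Finset.range k, (g j - c)) / ((T : ℝ) + 1) + c) := by
    filter_upwards [eventually_ge_atTop k] with T hT
    rw [key T (le_trans hT (Nat.le_succ T))]
    rw [add_div, mul_comm, mul_div_assoc, div_self (by positivity : ((T:ℝ)+1) ≠ 0), mul_one]
  have hlim : Tendsto
      (fun T : ℕ => (∑ j ∈ Finset.range k, (g j - c)) / ((T : ℝ) + 1) + c)
      atTop (𝓝 (0 + c)) := by
    apply Tendsto.add _ tendsto_const_nhds
    have := tendsto_one_div_add_atTop_nhds_zero_nat.const_mul (∑ j ∈ Finset.range k, (g j - c))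
    simp only [mul_zero] at this
    simpa [div_eq_mul_inv, one_div] using this
  rw [zero_add] at hlim
  exact Tendsto.congr' hev.symm hlim

end HatAux

section GameAux

open Filter Matrix Finset Topology HatAux

variable {V : Type} [Fintype V] [DecidableEq V]

lemma fin3 (a : Fin 3) : a = 0 ∨ a = 1 ∨ a = 2 := by omega

lemma P_stoch (G : BWR V) (s : V → V) (hs : G.Valid s) : MStoch (G.P s) := by
  constructor
  · intro i j
    show (0:ℝ) ≤ if G.player i = 2 then G.p i j else if s i = j then 1 else 0
    by_cases h : G.player i = 2
    · rw [if_pos h]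
      by_cases hj : j ∈ G.succ i
      · exact le_of_lt ((G.p_mem i j h).1 hj)
      · rw [G.p_zero i j h hj]
    · rw [if_neg h]
      by_cases hj : s i = j
      · rw [if_pos hj]; norm_num
      · rw [if_neg hj]
  · intro i
    show (∑ j, if G.player i = 2 then G.p i j else if s i = j then 1 else 0) = 1
    by_cases h : G.player i = 2
    · rw [Finset.sum_congr rfl fun j _ => if_pos h]
      rw [← Finset.sum_subset (Finset.subset_univ (G.succ i))
        (fun x _ hx => G.p_zero i x h hx)]
      exact G.p_sum i h
    · rw [Finset.sum_congr rfl fun j _ => if_neg h]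
      simp [Finset.sum_ite_eq]

lemma P_row_det (G : BWR V) (s : V → V) (x : V) (hx : G.player x ≠ 2) (y : V) :
    G.P s x y = if s x = y then 1 else 0 := by
  show (if G.player x = 2 then G.p x y else if s x = y then 1 else 0) = _
  rw [if_neg hx]

lemma mu_step_white (G : BWR V) (sW sB : V → V) (μ : V → ℝ)
    (hvalid : G.Valid (G.combine sW sB))
    (hval : ∀ v, μ v = G.payoff (G.combine sW sB) v)
    (hW : ∀ sW' : V → V, G.Valid (G.combine sW' sB) → ∀ v,
      G.payoff (G.combine sW' sB) v ≤ μ v)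
    (v u : V) (hv : G.player v = 0) (hu : u ∈ G.succ v) : μ u ≤ μ v := by
  classical
  have hv2 : G.player v ≠ 2 := by rw [hv]; decide
  have hs'v : G.combine (Function.update sW v u) sB v = u := by
    unfold BWR.combine
    rw [if_pos hv, Function.update_self]
  have hs'x : ∀ x, x ≠ v →
      G.combine (Function.update sW v u) sB x = G.combine sW sB x := by
    intro x hx
    unfold BWR.combine
    rw [Function.update_of_ne hx]
  have hvalid' : G.Valid (G.combine (Function.update sW v u) sB) := by
    intro x
    by_cases hx : x = v
    · rw [hx, hs'v]; exact hu
    · rw [hs'x x hx]; exact hvalid x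
  have hstW : MStoch (G.P (G.combine sW sB)) := P_stoch G _ hvalid
  have hstW' : MStoch (G.P (G.combine (Function.update sW v u) sB)) := P_stoch G _ hvalid'
  refine HatAux.key (G.P (G.combine sW sB)) (G.P (G.combine (Function.update sW v u) sB))
    hstW hstW' v u ?_ ?_ (G.rbar (G.combine sW sB))
    (G.rbar (G.combine (Function.update sW v u) sB)) ?_ μ ?_ ?_
  · intro x hx
    funext y
    show (if G.player x = 2 then G.p x y
        else if G.combine (Function.update sW v u) sB x = y then 1 else 0)
      = (if G.player x = 2 then G.p x y else if G.combine sW sB x = y then 1 else 0)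
    rw [hs'x x hx]
  · intro y
    show (if G.player v = 2 then G.p v y
        else if G.combine (Function.update sW v u) sB v = y then 1 else 0)
      = if y = u then 1 else 0
    rw [if_neg hv2, hs'v]
    exact if_congr eq_comm rfl rfl
  · intro x hx
    unfold BWR.rbar
    rw [hs'x x hx]
  · intro x; exact (hval x).symm
  · intro x; exact hW _ hvalid' x

lemma mu_step_black (G : BWR V) (sW sB : V → V) (μ : V → ℝ)
    (hvalid : G.Valid (G.combine sW sB))
    (hval : ∀ v, μ v = G.payoff (G.combine sW sB) v)
    (hB : ∀ sB' : V → V, G.Valid (G.combine sW sB') → ∀ v,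
      μ v ≤ G.payoff (G.combine sW sB') v)
    (v u : V) (hv : G.player v = 1) (hu : u ∈ G.succ v) : μ v ≤ μ u := by
  classical
  have hv0 : G.player v ≠ 0 := by rw [hv]; decide
  have hv2 : G.player v ≠ 2 := by rw [hv]; decide
  have hs'v : G.combine sW (Function.update sB v u) v = u := by
    unfold BWR.combine
    rw [if_neg hv0, Function.update_self]
  have hs'x : ∀ x, x ≠ v →
      G.combine sW (Function.update sB v u) x = G.combine sW sB x := by
    intro x hx
    unfold BWR.combine
    by_cases h0 : G.player x = 0
    · rw [if_pos h0, if_pos h0]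
    · rw [if_neg h0, if_neg h0, Function.update_of_ne hx]
  have hvalid' : G.Valid (G.combine sW (Function.update sB v u)) := by
    intro x
    by_cases hx : x = v
    · rw [hx, hs'v]; exact hu
    · rw [hs'x x hx]; exact hvalid x
  have hstW : MStoch (G.P (G.combine sW sB)) := P_stoch G _ hvalid
  have hstW' : MStoch (G.P (G.combine sW (Function.update sB v u))) := P_stoch G _ hvalid'
  have hkey := HatAux.key (G.P (G.combine sW sB)) (G.P (G.combine sW (Function.update sB v u)))
    hstW hstW' v u
    (by
      intro x hx
      funext y
      show (if G.player x = 2 then G.p x y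
          else if G.combine sW (Function.update sB v u) x = y then 1 else 0)
        = (if G.player x = 2 then G.p x y else if G.combine sW sB x = y then 1 else 0)
      rw [hs'x x hx])
    (by
      intro y
      show (if G.player v = 2 then G.p v y
          else if G.combine sW (Function.update sB v u) v = y then 1 else 0)
        = if y = u then 1 else 0
      rw [if_neg hv2, hs'v]
      exact if_congr eq_comm rfl rfl)
    (fun y => -(G.rbar (G.combine sW sB) y))
    (fun y => -(G.rbar (G.combine sW (Function.update sB v u)) y))
    (by
      intro x hx
      have : G.rbar (G.combine sW (Function.update sB v u)) x
          = G.rbar (G.combine sW sB) x := by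
        unfold BWR.rbar
        rw [hs'x x hx]
      show -(G.rbar (G.combine sW (Function.update sB v u)) x)
          = -(G.rbar (G.combine sW sB) x)
      rw [this])
    (fun x => -(μ x))
    (by
      intro x
      rw [HatAux.mpay_neg hstW]
      exact congrArg Neg.neg (hval x).symm)
    (by
      intro x
      rw [HatAux.mpay_neg hstW']
      exact neg_le_neg (hB _ hvalid' x))
  have hkey' : -μ u ≤ -μ v := hkey
  linarith

lemma mu_harm (G : BWR V) (s : V → V) (hs : G.Valid s) (μ : V → ℝ)
    (hval : ∀ v, μ v = G.payoff s v) (x : V) (hx : G.player x ≠ 2) :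
    μ (s x) = μ x := by
  obtain ⟨Q, hQt, hQP, hPQ, -, -⟩ := HatAux.exists_cesaro (G.P s) (P_stoch G s hs)
  have hμ : ∀ y, μ y = (Q.mulVec (G.rbar s)) y :=
    fun y => (hval y).trans (HatAux.mpay_eq hQt (G.rbar s) y)
  have harm : (G.P s).mulVec (Q.mulVec (G.rbar s)) = Q.mulVec (G.rbar s) := by
    rw [Matrix.mulVec_mulVec, hPQ]
  have h1 := congrFun harm x
  rw [HatAux.mulVec_apply'] at h1
  rw [Finset.sum_congr rfl fun y _ => by rw [P_row_det G s x hx y]] at h1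
  have h2 : ∑ y, (if s x = y then 1 else 0) * (Q.mulVec (G.rbar s)) y
      = (Q.mulVec (G.rbar s)) (s x) := by
    simp [ite_mul, Finset.sum_ite_eq]
  rw [h2] at h1
  rw [hμ (s x), hμ x, h1]

lemma hat_player_ne (G : BWR V) (μ : V → ℝ) (x : V) : (hatGame G μ).player x ≠ 2 := by
  show (if G.player x = 2 then 1 else G.player x) ≠ 2
  by_cases h : G.player x = 2
  · rw [if_pos h]; decide
  · rw [if_neg h]; exact h

lemma hat_player_zero (G : BWR V) (μ : V → ℝ) (x : V) :
    (hatGame G μ).player x = 0 ↔ G.player x = 0 := by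
  show (if G.player x = 2 then 1 else G.player x) = 0 ↔ G.player x = 0
  by_cases h : G.player x = 2
  · rw [if_pos h, h]; decide
  · rw [if_neg h]

lemma hat_succ (G : BWR V) (μ : V → ℝ) (x : V) :
    (hatGame G μ).succ x = if G.player x = 2 then {x} else G.succ x := rfl

lemma hat_P (G : BWR V) (μ : V → ℝ) (t : V → V) (x y : V) :
    (hatGame G μ).P t x y = if t x = y then 1 else 0 :=
  P_row_det (hatGame G μ) t x (hat_player_ne G μ x) y

lemma hat_rbar (G : BWR V) (μ : V → ℝ) (t : V → V) (x : V) :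
    (hatGame G μ).rbar t x = if G.player x = 2 then μ x else G.r x (t x) := by
  show (if (hatGame G μ).player x = 2 then _ else (hatGame G μ).r x (t x)) = _
  rw [if_neg (hat_player_ne G μ x)]
  rfl

lemma hat_pow (G : BWR V) (μ : V → ℝ) (t : V → V) :
    ∀ (k : ℕ) (x y : V), ((hatGame G μ).P t ^ k) x y = if t^[k] x = y then 1 else 0 := by
  intro k
  induction k with
  | zero =>
    intro x y
    rw [pow_zero]
    simp only [Function.iterate_zero, id_eq]
    exact Matrix.one_apply
  | succ k ih =>
    intro x y
    rw [pow_succ, Matrix.mul_apply]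
    rw [Finset.sum_congr rfl fun w _ => by rw [ih x w]]
    have hcol : ∑ w, (if t^[k] x = w then 1 else 0) * ((hatGame G μ).P t) w y
        = ((hatGame G μ).P t) (t^[k] x) y := by
      simp [ite_mul, Finset.sum_ite_eq]
    rw [hcol, hat_P, Function.iterate_succ_apply']

lemma hat_det_payoff (G : BWR V) (μ : V → ℝ) (t : V → V) (v : V) :
    (hatGame G μ).payoff t v
      = Filter.liminf (fun T : ℕ =>
          (∑ k ∈ Finset.range (T + 1), (hatGame G μ).rbar t (t^[k] v)) / (T + 1))
        Filter.atTop := by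
  unfold BWR.payoff
  apply Filter.liminf_congr
  apply Filter.Eventually.of_forall
  intro T
  congr 1
  rw [Finset.sum_apply]
  apply Finset.sum_congr rfl
  intro k _
  rw [HatAux.mulVec_apply']
  rw [Finset.sum_congr rfl fun y _ => by rw [hat_pow G μ t k v y]]
  simp [ite_mul, Finset.sum_ite_eq]

lemma hat_payoff_hit (G : BWR V) (μ : V → ℝ) (t : V → V) (v : V) (k : ℕ)
    (hk : G.player (t^[k] v) = 2) (hloop : ∀ x, G.player x = 2 → t x = x) :
    (hatGame G μ).payoff t v = μ (t^[k] v) := by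
  have hconst : ∀ d : ℕ, t^[k + d] v = t^[k] v := by
    intro d
    induction d with
    | zero => rfl
    | succ d ih =>
      have : k + (d + 1) = (k + d) + 1 := by omega
      rw [this, Function.iterate_succ_apply', ih, hloop _ hk]
  have hconst' : ∀ j, k ≤ j → t^[j] v = t^[k] v := by
    intro j hj
    obtain ⟨d, rfl⟩ := Nat.exists_eq_add_of_le hj
    exact hconst d
  rw [hat_det_payoff]
  apply Filter.Tendsto.liminf_eq
  apply HatAux.tendsto_cesaro_eventually_const _ _ k
  intro j hj
  rw [hconst' j hj, hat_rbar, if_pos hk]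

lemma hat_payoff_nohit (G : BWR V) (μ : V → ℝ) (t : V → V) (s'' : V → V) (v : V)
    (hnh : ∀ k : ℕ, G.player (t^[k] v) ≠ 2)
    (hagree : ∀ k : ℕ, s'' (t^[k] v) = t (t^[k] v)) :
    G.payoff s'' v = (hatGame G μ).payoff t v := by
  have hrow : ∀ (j : ℕ) (y : V), (G.P s'' ^ j) v y = if t^[j] v = y then 1 else 0 := by
    intro j
    induction j with
    | zero =>
      intro y
      rw [pow_zero]
      simp only [Function.iterate_zero, id_eq]
      exact Matrix.one_apply
    | succ j ih =>
      intro y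
      rw [pow_succ, Matrix.mul_apply]
      rw [Finset.sum_congr rfl fun w _ => by rw [ih w]]
      have hcol : ∑ w, (if t^[j] v = w then 1 else 0) * (G.P s'') w y
          = (G.P s'') (t^[j] v) y := by
        simp [ite_mul, Finset.sum_ite_eq]
      rw [hcol, P_row_det G s'' _ (hnh j) y, hagree j, Function.iterate_succ_apply']
  rw [hat_det_payoff]
  unfold BWR.payoff
  apply Filter.liminf_congr
  apply Filter.Eventually.of_forall
  intro T
  congr 1
  rw [Finset.sum_apply]
  apply Finset.sum_congr rfl
  intro k _
  rw [HatAux.mulVec_apply']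
  rw [Finset.sum_congr rfl fun y _ => by rw [hrow k y]]
  have hcol : ∑ y, (if t^[k] v = y then 1 else 0) * G.rbar s'' y
      = G.rbar s'' (t^[k] v) := by
    simp [ite_mul, Finset.sum_ite_eq]
  rw [hcol]
  rw [hat_rbar, if_neg (hnh k)]
  unfold BWR.rbar
  rw [if_neg (hnh k), hagree k]

end GameAux

set_option maxHeartbeats 1000000 in
/-- If `μ` is the value function of the BWR-game `G`, then `μ` is
also the value function of the BW-game `Ĝ` obtained by replacing every random
position `v` with a deterministic self-loop of local reward `μ v`. -/
theorem hatGame_value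
    {V : Type} [Fintype V] [DecidableEq V] (G : BWR V)
    (μ : V → ℝ) (hμ : G.IsValue μ) :
    (hatGame G μ).IsValue μ := by
  classical
  obtain ⟨sW, sB, hvalid, hval, hW, hB⟩ := hμ
  -- Bellman-type monotonicity of μ derived from the saddle point
  have L1 : ∀ v u, G.player v = 0 → u ∈ G.succ v → μ u ≤ μ v :=
    fun v u hv hu => mu_step_white G sW sB μ hvalid hval hW v u hv hu
  have L1' : ∀ v u, G.player v = 1 → u ∈ G.succ v → μ v ≤ μ u :=
    fun v u hv hu => mu_step_black G sW sB μ hvalid hval hB v u hv hu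
  have Lharm : ∀ x, G.player x ≠ 2 → μ (G.combine sW sB x) = μ x :=
    fun x hx => mu_harm G (G.combine sW sB) hvalid μ hval x hx
  -- the Black strategy in the hat game
  set sbh : V → V := fun x => if G.player x = 2 then x else sB x with hsbh
  have hsx : ∀ x, G.player x ≠ 0 → G.combine sW sB x = sB x := by
    intro x hx
    unfold BWR.combine
    rw [if_neg hx]
  have hswx : ∀ x, G.player x = 0 → G.combine sW sB x = sW x := by
    intro x hx
    unfold BWR.combine
    rw [if_pos hx]
  have hp1ne0 : ∀ x, G.player x = 1 → G.player x ≠ 0 := by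
    intro x hx; rw [hx]; decide
  have hp2ne0 : ∀ x, G.player x = 2 → G.player x ≠ 0 := by
    intro x hx; rw [hx]; decide
  have hp0ne2 : ∀ x, G.player x = 0 → G.player x ≠ 2 := by
    intro x hx; rw [hx]; decide
  have hp1ne2 : ∀ x, G.player x = 1 → G.player x ≠ 2 := by
    intro x hx; rw [hx]; decide
  -- structure of moves in the hat game
  have hcomb : ∀ (sW' sB' : V → V) (x : V),
      (hatGame G μ).combine sW' sB' x
        = if G.player x = 0 then sW' x else sB' x := by
    intro sW' sB' x
    show (if (hatGame G μ).player x = 0 then sW' x else sB' x) = _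
    by_cases h : G.player x = 0
    · rw [if_pos ((hat_player_zero G μ x).2 h), if_pos h]
    · rw [if_neg (fun hc => h ((hat_player_zero G μ x).1 hc)), if_neg h]
  -- THE UPPER BOUND
  have hUB : ∀ sW' : V → V,
      (hatGame G μ).Valid ((hatGame G μ).combine sW' sbh) →
      ∀ v, (hatGame G μ).payoff ((hatGame G μ).combine sW' sbh) v ≤ μ v := by
    intro sW' hv' v
    set t : V → V := (hatGame G μ).combine sW' sbh with hT
    have hloop : ∀ x, G.player x = 2 → t x = x := by
      intro x hx
      rw [hT, hcomb, if_neg (hp2ne0 x hx), hsbh]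
      simp only [if_pos hx]
    have hmove : ∀ x, G.player x = 0 → t x ∈ G.succ x := by
      intro x hx
      have := hv' x
      rw [hat_succ, if_neg (hp0ne2 x hx)] at this
      exact this
    have hblack : ∀ x, G.player x = 1 → t x = G.combine sW sB x := by
      intro x hx
      rw [hT, hcomb, if_neg (hp1ne0 x hx), hsbh]
      simp only [if_neg (hp1ne2 x hx)]
      rw [hsx x (hp1ne0 x hx)]
    have hstep : ∀ x, μ (t x) ≤ μ x := by
      intro x
      rcases fin3 (G.player x) with h | h | h
      · exact L1 x (t x) h (hmove x h)
      · rw [hblack x h, Lharm x (hp1ne2 x h)]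
      · rw [hloop x h]
    have hdec : ∀ j : ℕ, μ (t^[j] v) ≤ μ v := by
      intro j
      induction j with
      | zero => exact le_refl _
      | succ j ih =>
        rw [Function.iterate_succ_apply']
        exact le_trans (hstep _) ih
    by_cases hhit : ∃ k : ℕ, G.player (t^[k] v) = 2
    · obtain ⟨k, hk⟩ := hhit
      rw [hat_payoff_hit G μ t v k hk hloop]
      exact hdec k
    · push_neg at hhit
      have hvalid'' : G.Valid (G.combine sW' sB) := by
        intro x
        unfold BWR.combine
        by_cases h0 : G.player x = 0
        · rw [if_pos h0]
          have hm := hmove x h0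
          have htx : t x = sW' x := by rw [hT, hcomb, if_pos h0]
          rw [htx] at hm
          exact hm
        · rw [if_neg h0]
          have := hvalid x
          rw [hsx x h0] at this
          exact this
      have hagree : ∀ k : ℕ, (G.combine sW' sB) (t^[k] v) = t (t^[k] v) := by
        intro k
        set x := t^[k] v with hx
        unfold BWR.combine
        by_cases h0 : G.player x = 0
        · rw [if_pos h0, hT, hcomb, if_pos h0]
        · rw [if_neg h0, hT, hcomb, if_neg h0, hsbh]
          exact (if_neg (hhit k)).symm
      rw [← hat_payoff_nohit G μ t (G.combine sW' sB) v hhit hagree]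
      exact hW sW' hvalid'' v
  -- THE LOWER BOUND
  have hLB : ∀ sB' : V → V,
      (hatGame G μ).Valid ((hatGame G μ).combine sW sB') →
      ∀ v, μ v ≤ (hatGame G μ).payoff ((hatGame G μ).combine sW sB') v := by
    intro sB' hv' v
    set t : V → V := (hatGame G μ).combine sW sB' with hT
    have hloop : ∀ x, G.player x = 2 → t x = x := by
      intro x hx
      have := hv' x
      rw [hat_succ, if_pos hx] at this
      have htx : t x = sB' x := by rw [hT, hcomb, if_neg (hp2ne0 x hx)]
      rw [htx]
      rw [htx] at this
      exact Finset.mem_singleton.mp this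
    have hmove : ∀ x, G.player x = 1 → t x ∈ G.succ x := by
      intro x hx
      have := hv' x
      rw [hat_succ, if_neg (hp1ne2 x hx)] at this
      exact this
    have hwhite : ∀ x, G.player x = 0 → t x = G.combine sW sB x := by
      intro x hx
      rw [hT, hcomb, if_pos hx, hswx x hx]
    have hstep : ∀ x, μ x ≤ μ (t x) := by
      intro x
      rcases fin3 (G.player x) with h | h | h
      · rw [hwhite x h, Lharm x (hp0ne2 x h)]
      · exact L1' x (t x) h (hmove x h)
      · rw [hloop x h]
    have hinc : ∀ j : ℕ, μ v ≤ μ (t^[j] v) := by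
      intro j
      induction j with
      | zero => exact le_refl _
      | succ j ih =>
        rw [Function.iterate_succ_apply']
        exact le_trans ih (hstep _)
    by_cases hhit : ∃ k : ℕ, G.player (t^[k] v) = 2
    · obtain ⟨k, hk⟩ := hhit
      rw [hat_payoff_hit G μ t v k hk hloop]
      exact hinc k
    · push_neg at hhit
      set sB'' : V → V := fun x => if G.player x = 2 then sB x else sB' x with hsB''
      have hvalid'' : G.Valid (G.combine sW sB'') := by
        intro x
        unfold BWR.combine
        by_cases h0 : G.player x = 0
        · rw [if_pos h0]
          have := hvalid x
          rw [hswx x h0] at this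
          exact this
        · rw [if_neg h0, hsB'']
          by_cases h2 : G.player x = 2
          · simp only [if_pos h2]
            have := hvalid x
            rw [hsx x h0] at this
            exact this
          · simp only [if_neg h2]
            have h1 : G.player x = 1 := by
              rcases fin3 (G.player x) with h | h | h
              · exact absurd h h0
              · exact h
              · exact absurd h h2
            have hm := hmove x h1
            have htx : t x = sB' x := by rw [hT, hcomb, if_neg h0]
            rw [htx] at hm
            exact hm
      have hagree : ∀ k : ℕ, (G.combine sW sB'') (t^[k] v) = t (t^[k] v) := by
        intro k
        set x := t^[k] v with hx
        unfold BWR.combine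
        by_cases h0 : G.player x = 0
        · rw [if_pos h0, hT, hcomb, if_pos h0]
        · rw [if_neg h0, hT, hcomb, if_neg h0, hsB'']
          exact if_neg (hhit k)
      rw [← hat_payoff_nohit G μ t (G.combine sW sB'') v hhit hagree]
      exact hB sB'' hvalid'' v
  -- assemble the saddle point for the hat game
  refine ⟨sW, sbh, ?_, ?_, hUB, hLB⟩
  · intro x
    rw [hcomb, hat_succ]
    by_cases h0 : G.player x = 0
    · rw [if_pos h0, if_neg (hp0ne2 x h0)]
      have := hvalid x
      rw [hswx x h0] at this
      exact this
    · rw [if_neg h0, hsbh]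
      by_cases h2 : G.player x = 2
      · simp only [if_pos h2]
        exact Finset.mem_singleton_self x
      · simp only [if_neg h2]
        have := hvalid x
        rw [hsx x h0] at this
        exact this
  · intro v
    have h1 := hUB sW ?hv1 v
    case hv1 =>
      intro x
      rw [hcomb, hat_succ]
      by_cases h0 : G.player x = 0
      · rw [if_pos h0, if_neg (hp0ne2 x h0)]
        have := hvalid x
        rw [hswx x h0] at this
        exact this
      · rw [if_neg h0, hsbh]
        by_cases h2 : G.player x = 2
        · simp only [if_pos h2]
          exact Finset.mem_singleton_self x
        · simp only [if_neg h2]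
          have := hvalid x
          rw [hsx x h0] at this
          exact this
    have h2 := hLB sbh ?hv2 v
    case hv2 =>
      intro x
      rw [hcomb, hat_succ]
      by_cases h0 : G.player x = 0
      · rw [if_pos h0, if_neg (hp0ne2 x h0)]
        have := hvalid x
        rw [hswx x h0] at this
        exact this
      · rw [if_neg h0, hsbh]
        by_cases h2 : G.player x = 2
        · simp only [if_pos h2]
          exact Finset.mem_singleton_self x
        · simp only [if_neg h2]
          have := hvalid x
          rw [hsx x h0] at this
          exact this
    exact le_antisymm h2 h1
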